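/- arXiv:2403.19247 — 3 statements merged into one kernel-verified Lean document; each statement's English description precedes it below -/
import Mathlib

section
/- Let C(α,β) be the 9×9 block matrix with 3×3 blocks: identity blocks on the diagonal, block (1,2) equal to A(α), block (1,3) equal to B(β), block (2,3) zero (and Hermitian conjugates elsewhere), where A(α) has α in position (3,1) and zeros elsewhere, and B(β) has β in position (1,1) and zeros elsewhere. Then the partial transpose of C(α,β) (transposing the second tensor factor of the 3⊗3 structure) has smallest eigenvalue 1 − √(|α|² + |β|²). -/
/-- The 9×9 block matrix C(α,β) with identity diagonal blocks, block (1,2) = A(α)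
(single entry α at position (3,1)), block (1,3) = B(β) (single entry β at (1,1)),
block (2,3) = 0, and Hermitian conjugate blocks elsewhere.  Indices are 0-based. -/
def Cfam (α β : ℂ) : Matrix (Fin 3 × Fin 3) (Fin 3 × Fin 3) ℂ := fun p q =>
  if p.1 = q.1 then (if p.2 = q.2 then 1 else 0)
  else if p.1 = 0 ∧ q.1 = 1 then (if p.2 = 2 ∧ q.2 = 0 then α else 0)
  else if p.1 = 1 ∧ q.1 = 0 then (if p.2 = 0 ∧ q.2 = 2 then starRingEnd ℂ α else 0)
  else if p.1 = 0 ∧ q.1 = 2 then (if p.2 = 0 ∧ q.2 = 0 then β else 0)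
  else if p.1 = 2 ∧ q.1 = 0 then (if p.2 = 0 ∧ q.2 = 0 then starRingEnd ℂ β else 0)
  else 0

/-- Partial transpose on the second tensor factor. -/
def ptranspose (M : Matrix (Fin 3 × Fin 3) (Fin 3 × Fin 3) ℂ) :
    Matrix (Fin 3 × Fin 3) (Fin 3 × Fin 3) ℂ :=
  fun p q => M (p.1, q.2) (q.1, p.2)

set_option maxHeartbeats 2000000 in
open Matrix Complex in
lemma qform_aux (α β : ℂ) (x : Fin 3 × Fin 3 → ℂ) :
    star x ⬝ᵥ (ptranspose (Cfam α β)) *ᵥ x =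
      (∑ p : Fin 3 × Fin 3, (Complex.normSq (x p) : ℂ))
        + (starRingEnd ℂ) (x (0,0)) * (α * x (1,2) + β * x (2,0))
        + (x (0,0)) * (starRingEnd ℂ) (α * x (1,2) + β * x (2,0)) := by
  simp only [dotProduct, mulVec, ptranspose, Cfam, Fintype.sum_prod_type, Fin.sum_univ_three,
    Pi.star_apply, Complex.star_def, Prod.mk.injEq, Fin.reduceEq, and_true, and_false, true_and,
    false_and, if_true, if_false, ite_true, ite_false, and_self, mul_zero, zero_mul, add_zero,
    zero_add, mul_one, one_mul, Complex.normSq_eq_conj_mul_self, map_add, _root_.map_mul]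
  ring

open Matrix Complex in
lemma re_qform (α β : ℂ) (x : Fin 3 × Fin 3 → ℂ) :
    (star x ⬝ᵥ (ptranspose (Cfam α β)) *ᵥ x).re =
      (∑ p : Fin 3 × Fin 3, Complex.normSq (x p))
        + 2 * ((starRingEnd ℂ) (x (0,0)) * (α * x (1,2) + β * x (2,0))).re := by
  rw [qform_aux]
  have h1 : (x (0,0)) * (starRingEnd ℂ) (α * x (1,2) + β * x (2,0))
      = (starRingEnd ℂ) ((starRingEnd ℂ) (x (0,0)) * (α * x (1,2) + β * x (2,0))) := by
    rw [_root_.map_mul, Complex.conj_conj]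
  rw [h1]
  simp only [Complex.add_re, Complex.conj_re, ← Complex.ofReal_sum, Complex.ofReal_re]
  ring

open Matrix Complex in
lemma form_lower (α β : ℂ) (r : ℝ) (hr : 0 < r)
    (hr2 : r ^ 2 = ‖α‖ ^ 2 + ‖β‖ ^ 2) (x : Fin 3 × Fin 3 → ℂ) :
    (1 - r) * (∑ p : Fin 3 × Fin 3, Complex.normSq (x p)) ≤
      (star x ⬝ᵥ (ptranspose (Cfam α β)) *ᵥ x).re := by
  rw [re_qform]
  have h1 : -(‖(starRingEnd ℂ) (x (0,0)) * (α * x (1,2) + β * x (2,0))‖) ≤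
      ((starRingEnd ℂ) (x (0,0)) * (α * x (1,2) + β * x (2,0))).re :=
    (abs_le.1 (Complex.abs_re_le_norm _)).1
  have h2 : ‖(starRingEnd ℂ) (x (0,0)) * (α * x (1,2) + β * x (2,0))‖ ≤
      ‖x (0,0)‖ * (‖α‖ * ‖x (1,2)‖
        + ‖β‖ * ‖x (2,0)‖) := by
    rw [norm_mul, Complex.norm_conj]
    have := (norm_add_le (α * x (1,2)) (β * x (2,0)))
    rw [norm_mul, norm_mul] at this
    exact mul_le_mul_of_nonneg_left this (norm_nonneg _)
  have he : ∑ p ∈ ({((0:Fin 3),(0:Fin 3)), ((1:Fin 3),(2:Fin 3)), ((2:Fin 3),(0:Fin 3))} :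
      Finset (Fin 3 × Fin 3)), Complex.normSq (x p)
      = Complex.normSq (x (0,0)) + Complex.normSq (x (1,2)) + Complex.normSq (x (2,0)) := by
    rw [Finset.sum_insert (by decide), Finset.sum_insert (by decide), Finset.sum_singleton]
    ring
  have hS : ‖x (0,0)‖ ^ 2 + ‖x (1,2)‖ ^ 2 + ‖x (2,0)‖ ^ 2 ≤
      ∑ p : Fin 3 × Fin 3, Complex.normSq (x p) := by
    rw [Complex.sq_norm, Complex.sq_norm, Complex.sq_norm, ← he]
    exact Finset.sum_le_sum_of_subset_of_nonneg (Finset.subset_univ _)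
      (fun p _ _ => Complex.normSq_nonneg (x p))
  have key : 2 * ‖x (0,0)‖ * (‖α‖ * ‖x (1,2)‖
        + ‖β‖ * ‖x (2,0)‖)
      ≤ r * (‖x (0,0)‖ ^ 2 + ‖x (1,2)‖ ^ 2
        + ‖x (2,0)‖ ^ 2) := by
    nlinarith [sq_nonneg (r * ‖x (0,0)‖ - ‖α‖ * ‖x (1,2)‖
        - ‖β‖ * ‖x (2,0)‖),
      sq_nonneg (‖α‖ * ‖x (2,0)‖ - ‖β‖ * ‖x (1,2)‖),
      norm_nonneg (x (0,0)), norm_nonneg (x (1,2)), norm_nonneg (x (2,0)),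
      norm_nonneg α, norm_nonneg β, hr]
  have hrS : r * (‖x (0,0)‖ ^ 2 + ‖x (1,2)‖ ^ 2
        + ‖x (2,0)‖ ^ 2)
      ≤ r * (∑ p : Fin 3 × Fin 3, Complex.normSq (x p)) :=
    mul_le_mul_of_nonneg_left hS hr.le
  linarith

open Matrix Complex in
lemma basis_normSq {A : Matrix (Fin 3 × Fin 3) (Fin 3 × Fin 3) ℂ} (hA : A.IsHermitian)
    (i : Fin 3 × Fin 3) :
    ∑ p : Fin 3 × Fin 3, Complex.normSq
      ((WithLp.equiv 2 ((i : Fin 3 × Fin 3) → ℂ)) (hA.eigenvectorBasis i) p) = 1 := by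
  have h := hA.eigenvectorBasis.orthonormal.1 i
  rw [EuclideanSpace.norm_eq] at h
  have h2 := Real.sqrt_eq_one.mp h
  simpa [Complex.normSq_eq_norm_sq] using h2

open Matrix Complex in
lemma det_sub_smul {n : Type*} [Fintype n] [DecidableEq n] (A : Matrix n n ℂ)
    (hA : A.IsHermitian) (c : ℂ) :
    (A - c • (1 : Matrix n n ℂ)).det = ∏ i, ((hA.eigenvalues i : ℂ) - c) := by
  have hU : (hA.eigenvectorUnitary : Matrix n n ℂ) * star (hA.eigenvectorUnitary : Matrix n n ℂ) = 1 :=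
    Matrix.mem_unitaryGroup_iff.mp hA.eigenvectorUnitary.2
  have hdecomp : A - c • (1 : Matrix n n ℂ) =
      (hA.eigenvectorUnitary : Matrix n n ℂ) *
        (Matrix.diagonal (fun i => (hA.eigenvalues i : ℂ) - c)) *
        star (hA.eigenvectorUnitary : Matrix n n ℂ) := by
    conv_lhs => rw [hA.spectral_theorem]
    have hd : Matrix.diagonal (fun i => (hA.eigenvalues i : ℂ) - c)
        = Matrix.diagonal (RCLike.ofReal ∘ hA.eigenvalues) - c • 1 := by
      rw [Matrix.smul_one_eq_diagonal, ← Matrix.diagonal_sub]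
      rfl
    rw [hd, Matrix.mul_sub, Matrix.sub_mul]
    congr 1
    rw [Matrix.mul_smul, Matrix.mul_one, Matrix.smul_mul, hU]
  have hU' : star (hA.eigenvectorUnitary : Matrix n n ℂ) * (hA.eigenvectorUnitary : Matrix n n ℂ) = 1 :=
    Matrix.mem_unitaryGroup_iff'.mp hA.eigenvectorUnitary.2
  have h1 : ((hA.eigenvectorUnitary : Matrix n n ℂ)).det *
      (star (hA.eigenvectorUnitary : Matrix n n ℂ)).det = 1 := by
    rw [← Matrix.det_mul, hU, Matrix.det_one]
  rw [hdecomp, Matrix.det_mul, Matrix.det_mul, Matrix.det_diagonal]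
  linear_combination (∏ i, ((hA.eigenvalues i : ℂ) - c)) * h1

set_option maxHeartbeats 4000000 in
open Matrix Complex in
lemma eigvec_eq (α β : ℂ) (r : ℝ)
    (hr2 : (r : ℂ) * r = Complex.normSq α + Complex.normSq β) :
    (ptranspose (Cfam α β)) *ᵥ
      (fun p => if p = ((0:Fin 3),(0:Fin 3)) then (r : ℂ)
        else if p = (1,2) then -(starRingEnd ℂ α)
        else if p = (2,0) then -(starRingEnd ℂ β) else 0)
    = ((1 : ℂ) - r) • (fun p => if p = ((0:Fin 3),(0:Fin 3)) then (r : ℂ)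
        else if p = (1,2) then -(starRingEnd ℂ α)
        else if p = (2,0) then -(starRingEnd ℂ β) else 0) := by
  funext p
  fin_cases p <;>
    simp only [mulVec, dotProduct, Fintype.sum_prod_type, Fin.sum_univ_three, ptranspose, Cfam,
      Pi.smul_apply, smul_eq_mul] <;>
    norm_num [Prod.ext_iff, Fin.ext_iff, Complex.mul_conj]
  all_goals first
    | linear_combination hr2
    | ring

open Matrix Complex in
lemma M_zero : ptranspose (Cfam 0 0) = 1 := by
  funext p q
  by_cases h1 : p.1 = q.1 <;> by_cases h2 : p.2 = q.2 <;>
    simp [ptranspose, Cfam, Matrix.one_apply, Prod.ext_iff, h1, h2, eq_comm, ite_self]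

theorem min_eigenvalue_partial_transpose (α β : ℂ)
    (hα : ‖α‖ ≤ 1) (hβ : ‖β‖ ≤ 1)
    (h : (ptranspose (Cfam α β)).IsHermitian) :
    ⨅ i, h.eigenvalues i = 1 - Real.sqrt (‖α‖ ^ 2 + ‖β‖ ^ 2) := by
  by_cases hz0 : α = 0 ∧ β = 0
  · obtain ⟨hα0, hβ0⟩ := hz0
    subst hα0; subst hβ0
    have hone : ∀ i, h.eigenvalues i = 1 := by
      intro i
      have h2 := re_qform 0 0 ((WithLp.equiv 2 ((i : Fin 3 × Fin 3) → ℂ)) (h.eigenvectorBasis i))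
      rw [basis_normSq h i] at h2
      simp only [zero_mul, add_zero, mul_zero, Complex.zero_re] at h2
      rw [h.eigenvalues_eq i]
      exact h2
    have hfun : (fun i => h.eigenvalues i) = fun _ : Fin 3 × Fin 3 => (1:ℝ) := funext hone
    rw [show (⨅ i, h.eigenvalues i) = ⨅ _ : Fin 3 × Fin 3, (1:ℝ) from by rw [hfun]]
    rw [ciInf_const]
    simp
  · set r := Real.sqrt (‖α‖ ^ 2 + ‖β‖ ^ 2) with hrdef
    have habs : (0:ℝ) ≤ ‖α‖ ^ 2 + ‖β‖ ^ 2 := by positivity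
    have hr0 : 0 ≤ r := Real.sqrt_nonneg _
    have hr2 : r ^ 2 = ‖α‖ ^ 2 + ‖β‖ ^ 2 := Real.sq_sqrt habs
    have hrpos : 0 < r := by
      rw [hrdef]
      apply Real.sqrt_pos.mpr
      rcases (not_and_or.mp hz0) with hc | hc
      · have : 0 < ‖α‖ := norm_pos_iff.mpr hc
        nlinarith [norm_nonneg β]
      · have : 0 < ‖β‖ := norm_pos_iff.mpr hc
        nlinarith [norm_nonneg α]
    have hlow : ∀ i, 1 - r ≤ h.eigenvalues i := by
      intro i
      rw [h.eigenvalues_eq i]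
      have hform := form_lower α β r hrpos hr2
        ((WithLp.equiv 2 ((i : Fin 3 × Fin 3) → ℂ)) (h.eigenvectorBasis i))
      rw [basis_normSq h i, mul_one] at hform
      exact hform
    have hdet : (ptranspose (Cfam α β) - ((1:ℂ) - r) • 1).det = 0 := by
      rw [← Matrix.exists_mulVec_eq_zero_iff]
      refine ⟨(fun p => if p = ((0:Fin 3),(0:Fin 3)) then (r : ℂ)
        else if p = (1,2) then -(starRingEnd ℂ α)
        else if p = (2,0) then -(starRingEnd ℂ β) else 0), ?_, ?_⟩
      · intro hv
        have hv0 := congrFun hv ((0:Fin 3),(0:Fin 3))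
        simp at hv0
        exact hrpos.ne' hv0
      · rw [Matrix.sub_mulVec, Matrix.smul_mulVec, Matrix.one_mulVec]
        rw [eigvec_eq α β r (by
          have : ((r:ℝ)^2 : ℝ) = Complex.normSq α + Complex.normSq β := by
            rw [hr2, Complex.sq_norm, Complex.sq_norm]
          calc (r : ℂ) * r = ((r^2 : ℝ) : ℂ) := by push_cast; ring
            _ = Complex.normSq α + Complex.normSq β := by rw [this]; push_cast; ring)]
        simp
    rw [det_sub_smul _ h ((1:ℂ) - r)] at hdet
    obtain ⟨i0, _, hi0⟩ := Finset.prod_eq_zero_iff.mp hdet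
    have hi0' : h.eigenvalues i0 = 1 - r := by
      have hc : ((h.eigenvalues i0 : ℝ) : ℂ) = ((1 - r : ℝ) : ℂ) := by
        push_cast
        linear_combination hi0
      exact_mod_cast hc
    apply le_antisymm
    · exact hi0' ▸ ciInf_le (Finite.bddBelow_range _) i0
    · exact le_ciInf hlow
end

section
/- With C(α,β) as above, the partial transpose of C(α,β) has a negative eigenvalue if and only if |α|² + |β|² > 1. -/
open scoped ComplexOrder

lemma quad (α β : ℂ) (x : Fin 3 × Fin 3 → ℂ) :
    dotProduct (star x) (Matrix.mulVec (ptranspose (Cfam α β)) x) =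
      (∑ p : Fin 3 × Fin 3, starRingEnd ℂ (x p) * x p)
      + starRingEnd ℂ (x (0,0)) * (α * x (1,2) + β * x (2,0))
      + starRingEnd ℂ (starRingEnd ℂ (x (0,0)) * (α * x (1,2) + β * x (2,0))) := by
  simp [dotProduct, Matrix.mulVec, ptranspose, Cfam, Fintype.sum_prod_type,
    Fin.sum_univ_succ]
  ring

lemma psd_of (α β : ℂ) (hle : ‖α‖ ^ 2 + ‖β‖ ^ 2 ≤ 1) :
    (ptranspose (Cfam α β)).PosSemidef := by
  have herm : (ptranspose (Cfam α β)).IsHermitian := by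
    ext ⟨i, j⟩ ⟨k, l⟩
    fin_cases i <;> fin_cases j <;> fin_cases k <;> fin_cases l <;>
      simp [Matrix.conjTranspose_apply, ptranspose, Cfam]
  refine Matrix.PosSemidef.of_dotProduct_mulVec_nonneg herm fun x => ?_
  rw [quad]
  set a := x (0,0) with ha
  set u := α * x (1,2) + β * x (2,0) with hu
  have key : (∑ p : Fin 3 × Fin 3, starRingEnd ℂ (x p) * x p)
      + starRingEnd ℂ a * u + starRingEnd ℂ (starRingEnd ℂ a * u)
      = (((∑ p : Fin 3 × Fin 3, Complex.normSq (x p)) + 2 * (starRingEnd ℂ a * u).re : ℝ) : ℂ) := by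
    rw [add_assoc, Complex.add_conj]
    push_cast
    congr 1
    exact Finset.sum_congr rfl fun p _ => by rw [mul_comm, Complex.mul_conj]
  rw [key]
  rw [← Complex.ofReal_zero, Complex.real_le_real]
  have hsum : (∑ p : Fin 3 × Fin 3, Complex.normSq (x p)) ≥
      Complex.normSq a + Complex.normSq (x (1,2)) + Complex.normSq (x (2,0)) := by
    rw [Fintype.sum_prod_type]
    simp only [Fin.sum_univ_succ, Fin.sum_univ_zero, Fin.succ_zero_eq_one,
      Fin.succ_one_eq_two]
    nlinarith [Complex.normSq_nonneg (x (0,1)), Complex.normSq_nonneg (x (0,2)),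
      Complex.normSq_nonneg (x (1,0)), Complex.normSq_nonneg (x (1,1)),
      Complex.normSq_nonneg (x (2,1)), Complex.normSq_nonneg (x (2,2))]
  have hre : (starRingEnd ℂ a * u).re ≥ -(‖a‖ * ‖u‖) := by
    have h1 := Complex.abs_re_le_norm (starRingEnd ℂ a * u)
    have h2 : ‖starRingEnd ℂ a * u‖ = ‖a‖ * ‖u‖ := by
      rw [norm_mul, Complex.norm_conj]
    rw [h2] at h1
    cases abs_le.mp h1 with
    | intro h _ => linarith
  have habsu : ‖u‖ ≤ ‖α‖ * ‖x (1,2)‖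
      + ‖β‖ * ‖x (2,0)‖ := by
    calc ‖u‖ ≤ ‖α * x (1,2)‖ + ‖β * x (2,0)‖ :=
          norm_add_le _ _
      _ = _ := by rw [norm_mul, norm_mul]
  set A := ‖a‖
  set B := ‖x (1,2)‖
  set C := ‖x (2,0)‖
  set P := ‖α‖
  set Q := ‖β‖
  have hA : Complex.normSq a = A ^ 2 := (Complex.sq_norm a).symm
  have hB : Complex.normSq (x (1,2)) = B ^ 2 := (Complex.sq_norm _).symm
  have hC : Complex.normSq (x (2,0)) = C ^ 2 := (Complex.sq_norm _).symm
  have hA0 : 0 ≤ A := norm_nonneg _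
  have hB0 : 0 ≤ B := norm_nonneg _
  have hC0 : 0 ≤ C := norm_nonneg _
  have hP0 : 0 ≤ P := norm_nonneg _
  have hQ0 : 0 ≤ Q := norm_nonneg _
  have hU0 : 0 ≤ ‖u‖ := norm_nonneg _
  have hcs : (P * B + Q * C) ^ 2 ≤ (P ^ 2 + Q ^ 2) * (B ^ 2 + C ^ 2) := by
    nlinarith [sq_nonneg (P * C - Q * B)]
  have hcs2 : (P * B + Q * C) ^ 2 ≤ B ^ 2 + C ^ 2 := by
    nlinarith [sq_nonneg (P * B + Q * C), sq_nonneg B, sq_nonneg C, add_nonneg (sq_nonneg B) (sq_nonneg C)]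
  have habsu2 : ‖u‖ ^ 2 ≤ B ^ 2 + C ^ 2 := by
    nlinarith [add_nonneg (mul_nonneg hP0 hB0) (mul_nonneg hQ0 hC0)]
  nlinarith [sq_nonneg (A - ‖u‖), mul_nonneg hA0 hU0]

theorem partial_transpose_negative_eigenvalue_iff (α β : ℂ)
    (hα : ‖α‖ ≤ 1) (hβ : ‖β‖ ≤ 1)
    (h : (ptranspose (Cfam α β)).IsHermitian) :
    (∃ i, h.eigenvalues i < 0) ↔ 1 < ‖α‖ ^ 2 + ‖β‖ ^ 2 := by
  constructor
  · intro ⟨i, hi⟩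
    by_contra hc
    push_neg at hc
    have hpsd := psd_of α β hc
    have := hpsd.eigenvalues_nonneg i
    have heq : hpsd.1 = h := rfl
    rw [heq] at this
    linarith
  · intro hgt
    by_contra hc
    push_neg at hc
    have hpsd : (ptranspose (Cfam α β)).PosSemidef :=
      h.posSemidef_iff_eigenvalues_nonneg.mpr (fun i => hc i)
    set v : Fin 3 × Fin 3 → ℂ := fun p =>
      if p = (0,0) then 1 else if p = (1,2) then -(starRingEnd ℂ α)
      else if p = (2,0) then -(starRingEnd ℂ β) else 0 with hv
    have hq := hpsd.dotProduct_mulVec_nonneg v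
    rw [quad] at hq
    have hv00 : v (0,0) = 1 := by simp [hv]
    have hv12 : v (1,2) = -(starRingEnd ℂ α) := by
      simp (config := { decide := true }) [hv]
    have hv20 : v (2,0) = -(starRingEnd ℂ β) := by
      simp (config := { decide := true }) [hv]
    have hsum : (∑ p : Fin 3 × Fin 3, starRingEnd ℂ (v p) * v p)
        = 1 + starRingEnd ℂ α * α + starRingEnd ℂ β * β := by
      rw [Fintype.sum_prod_type]
      simp only [Fin.sum_univ_succ, Fin.sum_univ_zero, Fin.succ_zero_eq_one, Fin.succ_one_eq_two, hv]
      simp (config := { decide := true }) only [Prod.mk.injEq]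
      simp
      ring
    rw [hsum, hv00, hv12, hv20] at hq
    have hone : starRingEnd ℂ 1 = 1 := by simp
    have h1 : α * starRingEnd ℂ α = ((‖α‖ ^ 2 : ℝ) : ℂ) := by
      rw [Complex.mul_conj, Complex.sq_norm]
    have h2 : β * starRingEnd ℂ β = ((‖β‖ ^ 2 : ℝ) : ℂ) := by
      rw [Complex.mul_conj, Complex.sq_norm]
    have hval : (1 + starRingEnd ℂ α * α + starRingEnd ℂ β * β
        + starRingEnd ℂ 1 * (α * -(starRingEnd ℂ α) + β * -(starRingEnd ℂ β))
        + starRingEnd ℂ (starRingEnd ℂ 1 * (α * -(starRingEnd ℂ α) + β * -(starRingEnd ℂ β))))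
        = ((1 - (‖α‖ ^ 2 + ‖β‖ ^ 2) : ℝ) : ℂ) := by
      rw [hone, one_mul, map_add, _root_.map_mul, _root_.map_mul, map_neg, map_neg,
        Complex.conj_conj, Complex.conj_conj]
      simp only [mul_neg, mul_comm (starRingEnd ℂ α) α, mul_comm (starRingEnd ℂ β) β, h1, h2]
      push_cast
      ring
    rw [hval] at hq
    rw [← Complex.ofReal_zero, Complex.real_le_real] at hq
    linarith
end

section
/- Let C be a 4×4 Gram matrix of the block form [[C₀₀, C₀₁],[C₀₁†, C₀₀]] that is separable, i.e., (1/4)C = Σᵢ pᵢ |ψᵢ⟩⟨ψᵢ| ⊗ |φᵢ⟩⟨φᵢ| for some probability distribution pᵢ and qubit pure states. If the two diagonal entries of C₀₁ are equal, then C = Σᵢ qᵢ C₁⁽ⁱ⁾ ⊗ C₂⁽ⁱ⁾ for some probability distribution qᵢ and 2×2 Gram matrices C₁⁽ⁱ⁾, C₂⁽ⁱ⁾. -/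
open scoped ComplexOrder Kronecker Matrix

private lemma vecMulVec_star_posSemidef (v : Fin 2 → ℂ) :
    (Matrix.vecMulVec v (star v)).PosSemidef := by
  refine Matrix.PosSemidef.of_dotProduct_mulVec_nonneg ?_ ?_
  · ext i j
    simp [Matrix.vecMulVec_apply, Matrix.conjTranspose_apply, mul_comm]
  · intro x
    have : dotProduct (star x) (Matrix.vecMulVec v (star v) *ᵥ x)
        = star (dotProduct (star v) x) * (dotProduct (star v) x) := by
      simp [dotProduct, Matrix.mulVec, Matrix.vecMulVec_apply, Finset.mul_sum,
        Finset.sum_mul, Fin.sum_univ_two]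
      ring
    rw [this]
    exact star_mul_self_nonneg _

noncomputable def Gmat (v : Fin 2 → ℂ) : Matrix (Fin 2) (Fin 2) ℂ :=
  Matrix.vecMulVec v (star v) +
    Matrix.vecMulVec ![star (v 1), star (v 0)] (star ![star (v 1), star (v 0)])

private lemma Gmat_posSemidef (v : Fin 2 → ℂ) : (Gmat v).PosSemidef :=
  (vecMulVec_star_posSemidef v).add (vecMulVec_star_posSemidef _)

private lemma Gmat00 (v : Fin 2 → ℂ) : Gmat v 0 0 = v 0 * star (v 0) + star (v 1) * v 1 := by
  rw [Gmat, Matrix.add_apply, Matrix.vecMulVec_apply, Matrix.vecMulVec_apply]; simp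
private lemma Gmat11 (v : Fin 2 → ℂ) : Gmat v 1 1 = v 1 * star (v 1) + star (v 0) * v 0 := by
  rw [Gmat, Matrix.add_apply, Matrix.vecMulVec_apply, Matrix.vecMulVec_apply]; simp
private lemma Gmat01 (v : Fin 2 → ℂ) : Gmat v 0 1 = 2 * (v 0 * star (v 1)) := by
  rw [Gmat, Matrix.add_apply, Matrix.vecMulVec_apply, Matrix.vecMulVec_apply]; simp; ring
private lemma Gmat10 (v : Fin 2 → ℂ) : Gmat v 1 0 = 2 * (v 1 * star (v 0)) := by
  rw [Gmat, Matrix.add_apply, Matrix.vecMulVec_apply, Matrix.vecMulVec_apply]; simp; ring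

private lemma Gmat_diag (v : Fin 2 → ℂ) (hv : dotProduct (star v) v = 1) :
    ∀ k, Gmat v k k = 1 := by
  have h : star (v 0) * v 0 + star (v 1) * v 1 = 1 := by
    simpa [dotProduct, Fin.sum_univ_two] using hv
  intro k
  fin_cases k
  · show Gmat v 0 0 = 1
    rw [Gmat00, ← h]; ring
  · show Gmat v 1 1 = 1
    rw [Gmat11, ← h]; ring

private lemma sum_comb1 {n : ℕ} (f g : Fin n → ℂ) (a : ℂ) (H : ∀ i, f i = a * g i) :
    ∑ i, f i = a * ∑ i, g i := by
  rw [Finset.mul_sum]; exact Finset.sum_congr rfl fun i _ => H i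

private lemma sum_comb2 {n : ℕ} (f g h : Fin n → ℂ) (a b : ℂ)
    (H : ∀ i, f i = a * g i + b * h i) :
    ∑ i, f i = a * (∑ i, g i) + b * ∑ i, h i := by
  rw [Finset.mul_sum, Finset.mul_sum, ← Finset.sum_add_distrib]
  exact Finset.sum_congr rfl fun i _ => H i

private lemma sum_comb4 {n : ℕ} (f g1 g2 g3 g4 : Fin n → ℂ)
    (H : ∀ i, f i = g1 i + g2 i + g3 i + g4 i) :
    ∑ i, f i = (∑ i, g1 i) + (∑ i, g2 i) + (∑ i, g3 i) + ∑ i, g4 i := by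
  rw [← Finset.sum_add_distrib, ← Finset.sum_add_distrib, ← Finset.sum_add_distrib]
  exact Finset.sum_congr rfl fun i _ => H i

theorem separable_fixed_diagonal_implies_tensor_gram_decomposition (n : ℕ)
    (C : Matrix (Fin 2 × Fin 2) (Fin 2 × Fin 2) ℂ)
    (hC : C.PosSemidef) (hCdiag : ∀ p, C p p = 1)
    -- block form [[C₀₀, C₀₁],[C₀₁†, C₀₀]]: equal diagonal blocks
    (hblock : ∀ k l, C (0, k) (0, l) = C (1, k) (1, l))
    -- separability: (1/4)C = Σᵢ pᵢ |ψᵢ⟩⟨ψᵢ| ⊗ |φᵢ⟩⟨φᵢ|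
    (p : Fin n → ℝ) (hp : ∀ i, 0 ≤ p i) (hpsum : ∑ i, p i = 1)
    (ψ φ : Fin n → (Fin 2 → ℂ))
    (hψ : ∀ i, dotProduct (star (ψ i)) (ψ i) = 1)
    (hφ : ∀ i, dotProduct (star (φ i)) (φ i) = 1)
    (hsep : (1 / 4 : ℂ) • C = ∑ i, (p i : ℂ) •
      (Matrix.vecMulVec (ψ i) (star (ψ i)) ⊗ₖ Matrix.vecMulVec (φ i) (star (φ i))))
    -- equal diagonal entries of the off-diagonal block C₀₁
    (hfix : C (0, 0) (1, 0) = C (0, 1) (1, 1)) :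
    ∃ (m : ℕ) (q : Fin m → ℝ) (C1 C2 : Fin m → Matrix (Fin 2) (Fin 2) ℂ),
      (∀ i, 0 ≤ q i) ∧ (∑ i, q i = 1) ∧
      (∀ i, (C1 i).PosSemidef ∧ ∀ k, C1 i k k = 1) ∧
      (∀ i, (C2 i).PosSemidef ∧ ∀ k, C2 i k k = 1) ∧
      C = ∑ i, (q i : ℂ) • (C1 i ⊗ₖ C2 i) := by
  have key : ∀ k k' l l' : Fin 2,
      (∑ i, (p i : ℂ) * (ψ i k * star (ψ i l) * (φ i k' * star (φ i l'))))
        = (1/4) * C (k, k') (l, l') := by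
    intro k k' l l'
    have h := congrFun (congrFun hsep (k, k')) (l, l')
    simp only [Matrix.smul_apply, Matrix.sum_apply, Matrix.kroneckerMap_apply,
      Matrix.vecMulVec_apply, Pi.star_apply, smul_eq_mul] at h
    exact h.symm
  have hfix' : C (1, 0) (0, 0) = C (1, 1) (0, 1) := by
    rw [← hC.1.apply (1, 0) (0, 0), ← hC.1.apply (1, 1) (0, 1), hfix]
  refine ⟨n, p, fun i => Gmat (ψ i), fun i => Gmat (φ i), hp, hpsum,
    fun i => ⟨Gmat_posSemidef _, Gmat_diag _ (hψ i)⟩,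
    fun i => ⟨Gmat_posSemidef _, Gmat_diag _ (hφ i)⟩, ?_⟩
  refine Matrix.ext fun a b => ?_
  obtain ⟨k, k'⟩ := a; obtain ⟨l, l'⟩ := b
  revert k k' l l'
  simp only [Fin.forall_fin_two, Matrix.sum_apply, Matrix.smul_apply,
    Matrix.kroneckerMap_apply, Gmat00, Gmat01, Gmat10, Gmat11, smul_eq_mul]
  refine ⟨⟨⟨⟨?_,?_⟩,⟨?_,?_⟩⟩,⟨⟨?_,?_⟩,⟨?_,?_⟩⟩⟩,⟨⟨⟨?_,?_⟩,⟨?_,?_⟩⟩,⟨⟨?_,?_⟩,⟨?_,?_⟩⟩⟩⟩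
  -- (0,0)(0,0)
  · refine Eq.trans ?_ (sum_comb4 _
      (fun i => (p i : ℂ) * (ψ i 0 * star (ψ i 0) * (φ i 0 * star (φ i 0))))
      (fun i => (p i : ℂ) * (ψ i 0 * star (ψ i 0) * (φ i 1 * star (φ i 1))))
      (fun i => (p i : ℂ) * (ψ i 1 * star (ψ i 1) * (φ i 0 * star (φ i 0))))
      (fun i => (p i : ℂ) * (ψ i 1 * star (ψ i 1) * (φ i 1 * star (φ i 1))))
      (fun i => by ring)).symm
    rw [key 0 0 0 0, key 0 1 0 1, key 1 0 1 0, key 1 1 1 1]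
    simp only [hCdiag]; norm_num
  -- (0,0)(0,1)
  · refine Eq.trans ?_ (sum_comb2 _
      (fun i => (p i : ℂ) * (ψ i 0 * star (ψ i 0) * (φ i 0 * star (φ i 1))))
      (fun i => (p i : ℂ) * (ψ i 1 * star (ψ i 1) * (φ i 0 * star (φ i 1))))
      2 2 (fun i => by ring)).symm
    rw [key 0 0 0 1, key 1 0 1 1]
    linear_combination (1/2 : ℂ) * hblock 0 1
  -- (0,0)(1,0)
  · refine Eq.trans ?_ (sum_comb2 _
      (fun i => (p i : ℂ) * (ψ i 0 * star (ψ i 1) * (φ i 0 * star (φ i 0))))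
      (fun i => (p i : ℂ) * (ψ i 0 * star (ψ i 1) * (φ i 1 * star (φ i 1))))
      2 2 (fun i => by ring)).symm
    rw [key 0 0 1 0, key 0 1 1 1]
    linear_combination (1/2 : ℂ) * hfix
  -- (0,0)(1,1)
  · refine Eq.trans ?_ (sum_comb1 _
      (fun i => (p i : ℂ) * (ψ i 0 * star (ψ i 1) * (φ i 0 * star (φ i 1))))
      4 (fun i => by ring)).symm
    rw [key 0 0 1 1]
    ring
  -- (0,1)(0,0)
  · refine Eq.trans ?_ (sum_comb2 _
      (fun i => (p i : ℂ) * (ψ i 0 * star (ψ i 0) * (φ i 1 * star (φ i 0))))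
      (fun i => (p i : ℂ) * (ψ i 1 * star (ψ i 1) * (φ i 1 * star (φ i 0))))
      2 2 (fun i => by ring)).symm
    rw [key 0 1 0 0, key 1 1 1 0]
    linear_combination (1/2 : ℂ) * hblock 1 0
  -- (0,1)(0,1)
  · refine Eq.trans ?_ (sum_comb4 _
      (fun i => (p i : ℂ) * (ψ i 0 * star (ψ i 0) * (φ i 0 * star (φ i 0))))
      (fun i => (p i : ℂ) * (ψ i 0 * star (ψ i 0) * (φ i 1 * star (φ i 1))))
      (fun i => (p i : ℂ) * (ψ i 1 * star (ψ i 1) * (φ i 0 * star (φ i 0))))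
      (fun i => (p i : ℂ) * (ψ i 1 * star (ψ i 1) * (φ i 1 * star (φ i 1))))
      (fun i => by ring)).symm
    rw [key 0 0 0 0, key 0 1 0 1, key 1 0 1 0, key 1 1 1 1]
    simp only [hCdiag]; norm_num
  -- (0,1)(1,0)
  · refine Eq.trans ?_ (sum_comb1 _
      (fun i => (p i : ℂ) * (ψ i 0 * star (ψ i 1) * (φ i 1 * star (φ i 0))))
      4 (fun i => by ring)).symm
    rw [key 0 1 1 0]
    ring
  -- (0,1)(1,1)
  · refine Eq.trans ?_ (sum_comb2 _
      (fun i => (p i : ℂ) * (ψ i 0 * star (ψ i 1) * (φ i 1 * star (φ i 1))))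
      (fun i => (p i : ℂ) * (ψ i 0 * star (ψ i 1) * (φ i 0 * star (φ i 0))))
      2 2 (fun i => by ring)).symm
    rw [key 0 1 1 1, key 0 0 1 0]
    linear_combination (-(1/2) : ℂ) * hfix
  -- (1,0)(0,0)
  · refine Eq.trans ?_ (sum_comb2 _
      (fun i => (p i : ℂ) * (ψ i 1 * star (ψ i 0) * (φ i 0 * star (φ i 0))))
      (fun i => (p i : ℂ) * (ψ i 1 * star (ψ i 0) * (φ i 1 * star (φ i 1))))
      2 2 (fun i => by ring)).symm
    rw [key 1 0 0 0, key 1 1 0 1]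
    linear_combination (1/2 : ℂ) * hfix'
  -- (1,0)(0,1)
  · refine Eq.trans ?_ (sum_comb1 _
      (fun i => (p i : ℂ) * (ψ i 1 * star (ψ i 0) * (φ i 0 * star (φ i 1))))
      4 (fun i => by ring)).symm
    rw [key 1 0 0 1]
    ring
  -- (1,0)(1,0)
  · refine Eq.trans ?_ (sum_comb4 _
      (fun i => (p i : ℂ) * (ψ i 0 * star (ψ i 0) * (φ i 0 * star (φ i 0))))
      (fun i => (p i : ℂ) * (ψ i 0 * star (ψ i 0) * (φ i 1 * star (φ i 1))))
      (fun i => (p i : ℂ) * (ψ i 1 * star (ψ i 1) * (φ i 0 * star (φ i 0))))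
      (fun i => (p i : ℂ) * (ψ i 1 * star (ψ i 1) * (φ i 1 * star (φ i 1))))
      (fun i => by ring)).symm
    rw [key 0 0 0 0, key 0 1 0 1, key 1 0 1 0, key 1 1 1 1]
    simp only [hCdiag]; norm_num
  -- (1,0)(1,1)
  · refine Eq.trans ?_ (sum_comb2 _
      (fun i => (p i : ℂ) * (ψ i 0 * star (ψ i 0) * (φ i 0 * star (φ i 1))))
      (fun i => (p i : ℂ) * (ψ i 1 * star (ψ i 1) * (φ i 0 * star (φ i 1))))
      2 2 (fun i => by ring)).symm
    rw [key 0 0 0 1, key 1 0 1 1]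
    linear_combination (-(1/2) : ℂ) * hblock 0 1
  -- (1,1)(0,0)
  · refine Eq.trans ?_ (sum_comb1 _
      (fun i => (p i : ℂ) * (ψ i 1 * star (ψ i 0) * (φ i 1 * star (φ i 0))))
      4 (fun i => by ring)).symm
    rw [key 1 1 0 0]
    ring
  -- (1,1)(0,1)
  · refine Eq.trans ?_ (sum_comb2 _
      (fun i => (p i : ℂ) * (ψ i 1 * star (ψ i 0) * (φ i 1 * star (φ i 1))))
      (fun i => (p i : ℂ) * (ψ i 1 * star (ψ i 0) * (φ i 0 * star (φ i 0))))
      2 2 (fun i => by ring)).symm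
    rw [key 1 1 0 1, key 1 0 0 0]
    linear_combination (-(1/2) : ℂ) * hfix'
  -- (1,1)(1,0)
  · refine Eq.trans ?_ (sum_comb2 _
      (fun i => (p i : ℂ) * (ψ i 0 * star (ψ i 0) * (φ i 1 * star (φ i 0))))
      (fun i => (p i : ℂ) * (ψ i 1 * star (ψ i 1) * (φ i 1 * star (φ i 0))))
      2 2 (fun i => by ring)).symm
    rw [key 0 1 0 0, key 1 1 1 0]
    linear_combination (-(1/2) : ℂ) * hblock 1 0
  -- (1,1)(1,1)
  · refine Eq.trans ?_ (sum_comb4 _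
      (fun i => (p i : ℂ) * (ψ i 0 * star (ψ i 0) * (φ i 0 * star (φ i 0))))
      (fun i => (p i : ℂ) * (ψ i 0 * star (ψ i 0) * (φ i 1 * star (φ i 1))))
      (fun i => (p i : ℂ) * (ψ i 1 * star (ψ i 1) * (φ i 0 * star (φ i 0))))
      (fun i => (p i : ℂ) * (ψ i 1 * star (ψ i 1) * (φ i 1 * star (φ i 1))))
      (fun i => by ring)).symm
    rw [key 0 0 0 0, key 0 1 0 1, key 1 0 1 0, key 1 1 1 1]
    simp only [hCdiag]; norm_num
end
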